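/- For ε > 0 and a nonempty closed convex set C ⊆ R^d, the function x ↦ √(dist(x, C)² + ε) is differentiable everywhere on R^d with gradient (x - P_C(x)) / √(dist(x, C)² + ε); in particular its gradient vanishes at every point of C. -/

import Mathlib

open Metric
open RealInnerProductSpace

theorem sqrt_distsq_add_eps_hasGradientAt
    {d : ℕ} (ε : ℝ) (hε : 0 < ε)
    (C : Set (EuclideanSpace ℝ (Fin d)))
    (hne : C.Nonempty) (hcl : IsClosed C) (hconv : Convex ℝ C)
    (P : EuclideanSpace ℝ (Fin d) → EuclideanSpace ℝ (Fin d))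
    (hP : ∀ z, P z ∈ C ∧ ‖z - P z‖ = infDist z C) :
    (∀ x, HasGradientAt
      (fun y : EuclideanSpace ℝ (Fin d) => Real.sqrt ((infDist y C) ^ 2 + ε))
      ((Real.sqrt ((infDist x C) ^ 2 + ε))⁻¹ • (x - P x)) x) ∧
    (∀ x ∈ C,
      (Real.sqrt ((infDist x C) ^ 2 + ε))⁻¹ • (x - P x) = 0) := by
  -- variational inequality
  have hvar : ∀ z : EuclideanSpace ℝ (Fin d), ∀ w ∈ C, ⟪z - P z, w - P z⟫ ≤ 0 := by
    intro z
    have h1 : ‖z - P z‖ = ⨅ w : C, ‖z - w‖ := by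
      rw [(hP z).2, infDist_eq_iInf]
      simp only [dist_eq_norm]
    exact (norm_eq_iInf_iff_real_inner_le_zero hconv (hP z).1).1 h1
  -- P is 1-Lipschitz
  have hlip : ∀ z w : EuclideanSpace ℝ (Fin d), ‖P z - P w‖ ≤ ‖z - w‖ := by
    intro z w
    have h1 : ⟪z - P z, P w - P z⟫ ≤ 0 := hvar z (P w) (hP w).1
    have h2 : ⟪w - P w, P z - P w⟫ ≤ 0 := hvar w (P z) (hP z).1
    have hid : z - w = (z - P z) + (P z - P w) + (P w - w) := by abel
    have key : ‖P z - P w‖ ^ 2 ≤ ⟪z - w, P z - P w⟫ := by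
      rw [hid, inner_add_left, inner_add_left, ← real_inner_self_eq_norm_sq]
      have h1' : ⟪z - P z, P z - P w⟫ ≥ 0 := by
        have : P w - P z = -(P z - P w) := by abel
        rw [this, inner_neg_right] at h1; linarith
      have h2' : ⟪P w - w, P z - P w⟫ ≥ 0 := by
        have : P w - w = -(w - P w) := by abel
        rw [this, inner_neg_left]; linarith
      linarith
    have hle : ⟪z - w, P z - P w⟫ ≤ ‖z - w‖ * ‖P z - P w‖ := real_inner_le_norm _ _
    rcases eq_or_lt_of_le (norm_nonneg (P z - P w)) with h0 | h0
    · rw [← h0]; exact norm_nonneg _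
    · have : ‖P z - P w‖ * ‖P z - P w‖ ≤ ‖z - w‖ * ‖P z - P w‖ := by
        nlinarith [key, hle]
      exact le_of_mul_le_mul_right this h0
  have hsq : ∀ z : EuclideanSpace ℝ (Fin d), infDist z C ^ 2 = ‖z - P z‖ ^ 2 := fun z => by rw [(hP z).2]
  -- the quadratic error bound
  have herr : ∀ x y : EuclideanSpace ℝ (Fin d),
      |‖y - P y‖ ^ 2 - ‖x - P x‖ ^ 2 - 2 * ⟪y - x, x - P x⟫| ≤ ‖y - x‖ ^ 2 := by
    intro x y
    have hu : ‖y - P y‖ ^ 2 ≤ ‖y - x‖ ^ 2 + 2 * ⟪y - x, x - P x⟫ + ‖x - P x‖ ^ 2 := by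
      have h1 : ‖y - P y‖ ≤ ‖y - P x‖ := by
        rw [(hP y).2, ← dist_eq_norm]
        exact infDist_le_dist_of_mem (hP x).1
      have h2 : ‖y - P x‖ ^ 2 = ‖y - x‖ ^ 2 + 2 * ⟪y - x, x - P x⟫ + ‖x - P x‖ ^ 2 := by
        have : y - P x = (y - x) + (x - P x) := by abel
        rw [this, norm_add_sq_real]
      nlinarith [norm_nonneg (y - P y), norm_nonneg (y - P x)]
    have hl' : ‖x - P x‖ ^ 2 ≤ ‖x - y‖ ^ 2 + 2 * ⟪x - y, y - P y⟫ + ‖y - P y‖ ^ 2 := by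
      have h1 : ‖x - P x‖ ≤ ‖x - P y‖ := by
        rw [(hP x).2, ← dist_eq_norm]
        exact infDist_le_dist_of_mem (hP y).1
      have h2 : ‖x - P y‖ ^ 2 = ‖x - y‖ ^ 2 + 2 * ⟪x - y, y - P y⟫ + ‖y - P y‖ ^ 2 := by
        have : x - P y = (x - y) + (y - P y) := by abel
        rw [this, norm_add_sq_real]
      nlinarith [norm_nonneg (x - P x), norm_nonneg (x - P y)]
    have hxy : ‖x - y‖ = ‖y - x‖ := by rw [norm_sub_rev]
    have hid : ⟪x - y, y - P y⟫ =
        -(‖y - x‖ ^ 2) - ⟪y - x, x - P x⟫ + ⟪y - x, P y - P x⟫ := by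
      have h1 : x - y = -(y - x) := by abel
      have h2 : y - P y = (y - x) + (x - P x) - (P y - P x) := by abel
      rw [h1, h2, inner_neg_left, inner_sub_right, inner_add_right,
        real_inner_self_eq_norm_sq]
      ring
    have hc : ⟪y - x, P y - P x⟫ ≤ ‖y - x‖ * ‖P y - P x‖ := real_inner_le_norm _ _
    have hl2 : ‖P y - P x‖ ≤ ‖y - x‖ := hlip y x
    rw [abs_le]
    constructor
    · nlinarith [norm_nonneg (y - x), norm_nonneg (P y - P x)]
    · nlinarith
  -- gradient of squared distance
  have hgrad : ∀ x : EuclideanSpace ℝ (Fin d), HasFDerivAt (fun y : EuclideanSpace ℝ (Fin d) => infDist y C ^ 2 + ε)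
      (innerSL ℝ ((2 : ℝ) • (x - P x))) x := by
    intro x
    have base : HasFDerivAt (fun y : EuclideanSpace ℝ (Fin d) => infDist y C ^ 2)
        (innerSL ℝ ((2 : ℝ) • (x - P x))) x := by
      rw [hasFDerivAt_iff_isLittleO_nhds_zero]
      rw [Asymptotics.isLittleO_iff]
      intro c hc
      filter_upwards [Metric.ball_mem_nhds (0 : EuclideanSpace ℝ (Fin d)) hc] with h hh
      have hb := herr x (x + h)
      have hx1 : x + h - x = h := by abel
      rw [hx1] at hb
      have happ : (innerSL ℝ ((2 : ℝ) • (x - P x))) h = 2 * ⟪h, x - P x⟫ := by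
        rw [innerSL_apply_apply, real_inner_smul_left, real_inner_comm]
      rw [hsq, hsq, happ]
      have hhn : ‖h‖ < c := by simpa [dist_eq_norm] using hh
      have : |‖x + h - P (x + h)‖ ^ 2 - ‖x - P x‖ ^ 2 - 2 * ⟪h, x - P x⟫| ≤ ‖h‖ ^ 2 := hb
      calc ‖‖x + h - P (x + h)‖ ^ 2 - ‖x - P x‖ ^ 2 - 2 * ⟪h, x - P x⟫‖
          ≤ ‖h‖ ^ 2 := by rwa [Real.norm_eq_abs]
        _ = ‖h‖ * ‖h‖ := sq (‖h‖) ▸ by ring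
        _ ≤ c * ‖h‖ := by nlinarith [norm_nonneg h]
    exact base.add_const ε
  have hpos : ∀ x : EuclideanSpace ℝ (Fin d), 0 < infDist x C ^ 2 + ε := fun x =>
    add_pos_of_nonneg_of_pos (sq_nonneg _) hε
  constructor
  · intro x
    have hsqrt := (hgrad x).sqrt (ne_of_gt (hpos x))
    rw [hasGradientAt_iff_hasFDerivAt]
    convert hsqrt using 1
    any_goals rfl
    ext y
    have hs : Real.sqrt (infDist x C ^ 2 + ε) > 0 := Real.sqrt_pos.2 (hpos x)
    rw [InnerProductSpace.toDual_apply_apply, ContinuousLinearMap.smul_apply, innerSL_apply_apply,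
      real_inner_smul_left, real_inner_smul_left, smul_eq_mul]
    field_simp
  · intro x hx
    have h0 : infDist x C = 0 := infDist_zero_of_mem hx
    have : ‖x - P x‖ = 0 := by rw [(hP x).2, h0]
    have hxp : x - P x = 0 := by rwa [norm_eq_zero] at this
    rw [hxp, smul_zero]
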